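/- Let γ ∈ (0,α). Assume: (i) condition (C1) with exponent γ: there is c0 > 0 such that G(A_s(Q), z0) ≥ c0·(s/r)^γ·G(A_r(Q), z0) for all Q ∈ ∂D, r ∈ (0,R) and s ∈ (0,r); (ii) the interior lower bound: for every c1 > 0 there is c > 0 such that G(x,y) ≥ c·|x-y|^{α-d} whenever x, y ∈ D satisfy 0 < |x-y| ≤ c1·min(ρ_D(x), ρ_D(y)). Then there exists a constant c > 0 such that for every x, y ∈ D with r(x,y) < ε1: min(g(A_{r(x,y)}(Q_x)), g(A_{r(x,y)}(Q_y))) ≥ c·r(x,y)^γ. -/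

import Mathlib

open Metric Set MeasureTheory

/-- Distance to the boundary of `D`. -/
noncomputable def rho {d : ℕ} (D : Set (EuclideanSpace ℝ (Fin d)))
    (x : EuclideanSpace ℝ (Fin d)) : ℝ :=
  Metric.infDist x (frontier D)

/-- `r(x,y) := max(ρ_D(x), ρ_D(y), |x-y|)`. -/
noncomputable def rxy {d : ℕ} (D : Set (EuclideanSpace ℝ (Fin d)))
    (x y : EuclideanSpace ℝ (Fin d)) : ℝ :=
  max (max (rho D x) (rho D y)) (dist x y)

/-- The set `𝓑(x,y)`. -/
noncomputable def BB {d : ℕ} (D : Set (EuclideanSpace ℝ (Fin d))) (M ε1 : ℝ)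
    (z0 x y : EuclideanSpace ℝ (Fin d)) : Set (EuclideanSpace ℝ (Fin d)) :=
  if rxy D x y < ε1 then
    {A | A ∈ D ∧ rxy D x y / M < rho D A ∧ max (dist x A) (dist y A) < 5 * rxy D x y}
  else {z0}

open Classical in
/-- `g(x) := min(G(x,z0), C1)`, with the convention `g(z0) = C1` (since `G(z0,z0) = ∞`). -/
noncomputable def gfun {d : ℕ} (G : EuclideanSpace ℝ (Fin d) → EuclideanSpace ℝ (Fin d) → ℝ)
    (z0 : EuclideanSpace ℝ (Fin d)) (C1 : ℝ) (x : EuclideanSpace ℝ (Fin d)) : ℝ :=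
  if x = z0 then C1 else min (G x z0) C1

set_option maxHeartbeats 1000000 in
theorem stmt9
    {d : ℕ} (hd : 2 ≤ d)
    {D : Set (EuclideanSpace ℝ (Fin d))} (hDopen : IsOpen D) (hDbdd : Bornology.IsBounded D)
    {κ R : ℝ} (hκ0 : 0 < κ) (hκ2 : κ ≤ 1 / 2) (hR : 0 < R)
    {A : EuclideanSpace ℝ (Fin d) → ℝ → EuclideanSpace ℝ (Fin d)}
    (hfat : ∀ Q ∈ frontier D, ∀ r : ℝ, 0 < r → r < R →
      A Q r ∈ D ∧ ball (A Q r) (κ * r) ⊆ D ∩ ball Q r)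
    {M ε1 : ℝ} (hM : M = 2 / κ) (hε1 : ε1 = R / (12 * M))
    {z0 : EuclideanSpace ℝ (Fin d)} (hz0D : z0 ∈ D)
    (hz0l : 2 * R / M < rho D z0) (hz0u : rho D z0 < R)
    {α : ℝ} (hα0 : 0 < α) (hα2 : α < 2) (hαd : α < d)
    {G : EuclideanSpace ℝ (Fin d) → EuclideanSpace ℝ (Fin d) → ℝ}
    (hGsymm : ∀ x y, G x y = G y x)
    (hGpos : ∀ x ∈ D, ∀ y ∈ D, x ≠ y → 0 < G x y)
    {C0 : ℝ} (hC0 : 1 ≤ C0)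
    (hGup : ∀ x ∈ D, ∀ y ∈ D, x ≠ y → G x y ≤ C0 * dist x y ^ (α - d))
    (hGlow : ∀ x ∈ D, ∀ y ∈ D, x ≠ y → dist x y ≤ rho D y / 2 →
      C0⁻¹ * dist x y ^ (α - d) ≤ G x y)
    {C1 : ℝ} (hC1 : C1 = C0 * (2 : ℝ) ^ ((d : ℝ) - α) * rho D z0 ^ (α - d))
    {Qb : EuclideanSpace ℝ (Fin d) → EuclideanSpace ℝ (Fin d)}
    (hQb : ∀ x ∈ D, Qb x ∈ frontier D ∧ dist x (Qb x) = rho D x)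
    {γ : ℝ} (hγ0 : 0 < γ) (hγα : γ < α)
    (hC1cond : ∃ c0 > 0, ∀ Q ∈ frontier D, ∀ r : ℝ, 0 < r → r < R → ∀ s : ℝ, 0 < s → s < r →
      c0 * (s / r) ^ γ * G (A Q r) z0 ≤ G (A Q s) z0)
    (hint : ∀ c1 : ℝ, 0 < c1 → ∃ c > 0, ∀ x ∈ D, ∀ y ∈ D, x ≠ y →
      dist x y ≤ c1 * min (rho D x) (rho D y) → c * dist x y ^ (α - d) ≤ G x y)
 :
    ∃ c > 0, ∀ x ∈ D, ∀ y ∈ D, rxy D x y < ε1 →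
      c * rxy D x y ^ γ ≤
        min (gfun G z0 C1 (A (Qb x) (rxy D x y))) (gfun G z0 C1 (A (Qb y) (rxy D x y))) := by
  have hM0 : 0 < M := by rw [hM]; positivity
  have hM4 : 4 ≤ M := by
    rw [hM, le_div_iff₀ hκ0]; linarith
  have hε10 : 0 < ε1 := by rw [hε1]; positivity
  have hρz0 : 0 < rho D z0 := by
    have : 0 < 2 * R / M := by positivity
    linarith
  set r0 : ℝ := min (R / 2) (rho D z0 / 2) with hr0def
  have hr00 : 0 < r0 := lt_min (by positivity) (by positivity)
  have hr0R : r0 < R := lt_of_le_of_lt (min_le_left _ _) (by linarith)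
  have hRM : R / M < rho D z0 / 2 := by
    rw [div_lt_div_iff₀ hM0 (by norm_num)]
    rw [div_lt_iff₀ hM0] at hz0l
    nlinarith
  have hε1r0 : ε1 < r0 := by
    rw [hε1]
    apply lt_min
    · rw [div_lt_div_iff₀ (by nlinarith) (by norm_num)]
      nlinarith
    · refine lt_trans ?_ hRM
      rw [div_lt_div_iff₀ (by nlinarith) hM0]
      nlinarith
  -- D is bounded: uniform diameter bound L ≥ 1
  obtain ⟨L0, hL0⟩ := Metric.isBounded_iff.mp hDbdd
  set L : ℝ := max L0 1 with hLdef
  have hL1 : (1 : ℝ) ≤ L := le_max_right _ _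
  have hL0' : 0 < L := by linarith
  have hLd : ∀ a ∈ D, ∀ b ∈ D, dist a b ≤ L := fun a ha b hb =>
    le_trans (hL0 ha hb) (le_max_left _ _)
  -- constants
  obtain ⟨c2, hc20, hc2⟩ := hint (L / (κ * r0)) (by positivity)
  obtain ⟨c0, hc00, hC1c⟩ := hC1cond
  have hC10 : 0 < C1 := by
    rw [hC1]
    have h1 := Real.rpow_pos_of_pos hρz0 (α - (d:ℝ))
    have h2 := Real.rpow_pos_of_pos (two_pos : (0:ℝ) < 2) ((d:ℝ) - α)
    have hC0' : (0:ℝ) < C0 := by linarith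
    exact mul_pos (mul_pos hC0' h2) h1
  have hαd' : α - (d : ℝ) ≤ 0 := by
    have : (2 : ℝ) ≤ d := by exact_mod_cast hd
    linarith
  have hpnotD : ∀ p ∈ frontier D, p ∉ D := fun p hp => by
    rw [hDopen.frontier_eq] at hp; exact hp.2
  set cA : ℝ := c2 * L ^ (α - d) with hcAdef
  have hcA0 : 0 < cA := mul_pos hc20 (Real.rpow_pos_of_pos hL0' _)
  -- uniform lower bound at the reference scale r0
  have key0 : ∀ Q ∈ frontier D, cA ≤ G (A Q r0) z0 := by
    intro Q hQ
    obtain ⟨hAD, hAball⟩ := hfat Q hQ r0 hr00 hr0R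
    set A' := A Q r0 with hA'def
    have hfne : (frontier D).Nonempty := ⟨Q, hQ⟩
    have hrhoA : κ * r0 ≤ rho D A' := by
      rw [rho]
      by_contra h
      push_neg at h
      obtain ⟨p, hp, hpd⟩ := (Metric.infDist_lt_iff hfne).mp h
      exact hpnotD p hp (hAball (by rwa [mem_ball, dist_comm])).1
    have hA'Q : dist A' Q < r0 := by
      have : A' ∈ ball Q r0 := (hAball (mem_ball_self (by positivity))).2
      rwa [mem_ball] at this
    have hrhoA_lt : rho D A' < r0 :=
      lt_of_le_of_lt (Metric.infDist_le_dist_of_mem hQ) hA'Q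
    have hA'ne : A' ≠ z0 := by
      intro h
      rw [h] at hrhoA_lt
      have := min_le_right (R / 2) (rho D z0 / 2)
      rw [← hr0def] at this
      linarith
    have hdL : dist A' z0 ≤ L := hLd A' hAD z0 hz0D
    have hdc1 : dist A' z0 ≤ L / (κ * r0) * min (rho D A') (rho D z0) := by
      have hmin : κ * r0 ≤ min (rho D A') (rho D z0) := by
        apply le_min hrhoA
        have : r0 ≤ rho D z0 / 2 := min_le_right _ _
        nlinarith
      calc dist A' z0 ≤ L := hdL
        _ = L / (κ * r0) * (κ * r0) := (div_mul_cancel₀ L (by positivity : (κ * r0) ≠ 0)).symm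
        _ ≤ L / (κ * r0) * min (rho D A') (rho D z0) := by
            apply mul_le_mul_of_nonneg_left hmin (by positivity)
    have hG := hc2 A' hAD z0 hz0D hA'ne hdc1
    refine le_trans ?_ hG
    apply mul_le_mul_of_nonneg_left _ hc20.le
    exact Real.rpow_le_rpow_of_nonpos (dist_pos.mpr hA'ne) hdL hαd'
  set c3 : ℝ := c0 * cA / r0 ^ γ with hc3def
  have hc30 : 0 < c3 := by
    have := Real.rpow_pos_of_pos hr00 γ
    positivity
  set c : ℝ := min c3 (C1 / ε1 ^ γ) with hcdef
  have hc0 : 0 < c := by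
    have := Real.rpow_pos_of_pos hε10 γ
    apply lt_min hc30
    positivity
  -- key estimate at scale r < ε1
  have key : ∀ Q ∈ frontier D, ∀ r : ℝ, 0 < r → r < ε1 → c * r ^ γ ≤ gfun G z0 C1 (A Q r) := by
    intro Q hQ r hr hrε
    have hrr0 : r < r0 := hrε.trans hε1r0
    have hCr : c * r ^ γ ≤ C1 := by
      have h1 : r ^ γ ≤ ε1 ^ γ := Real.rpow_le_rpow hr.le hrε.le hγ0.le
      have h2 : c ≤ C1 / ε1 ^ γ := min_le_right _ _
      have hε1γ : 0 < ε1 ^ γ := Real.rpow_pos_of_pos hε10 γ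
      calc c * r ^ γ ≤ C1 / ε1 ^ γ * ε1 ^ γ := by
            apply mul_le_mul h2 h1 (Real.rpow_nonneg hr.le γ) (by positivity)
        _ = C1 := by field_simp
    by_cases hA : A Q r = z0
    · rw [gfun, if_pos hA]; exact hCr
    · rw [gfun, if_neg hA]
      refine le_min ?_ hCr
      have hchain := hC1c Q hQ r0 hr00 hr0R r hr hrr0
      have h0 : c0 * (r / r0) ^ γ * cA ≤ c0 * (r / r0) ^ γ * G (A Q r0) z0 := by
        apply mul_le_mul_of_nonneg_left (key0 Q hQ)
        positivity
      have heq : c0 * (r / r0) ^ γ * cA = c3 * r ^ γ := by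
        rw [Real.div_rpow hr.le hr00.le, hc3def]
        have : r0 ^ γ ≠ 0 := (Real.rpow_pos_of_pos hr00 γ).ne'
        field_simp
      have : c * r ^ γ ≤ c3 * r ^ γ := by
        apply mul_le_mul_of_nonneg_right (min_le_left _ _) (Real.rpow_nonneg hr.le γ)
      linarith
  refine ⟨c, hc0, fun x hx y hy hrxy => ?_⟩
  have hrpos : 0 < rxy D x y := by
    obtain ⟨hQx, hdx⟩ := hQb x hx
    have hxne : x ≠ Qb x := fun h => hpnotD (Qb x) hQx (h ▸ hx)
    have : 0 < rho D x := hdx ▸ dist_pos.mpr hxne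
    calc (0:ℝ) < rho D x := this
      _ ≤ rxy D x y := le_trans (le_max_left _ _) (le_max_left _ _)
  exact le_min (key (Qb x) (hQb x hx).1 _ hrpos hrxy)
    (key (Qb y) (hQb y hy).1 _ hrpos hrxy)
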